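/- Let G be a graph on n₀ vertices that is the edge-disjoint union of q₀+1 spanning trees and in which three fixed vertices u₀, v₀, w₀ each have degree q₀+2 and span a triangle, where q₀+1 < ⌊(n₀-1)/2⌋. Then there exists a graph G' on n₀+2 vertices that is the edge-disjoint union of q₀+2 spanning trees, in which u₀, v₀, w₀ each have degree q₀+3 and still span a triangle. -/

import Mathlib

open SimpleGraph

private lemma pendant_not_mem_cycle {W : Type*} {H : SimpleGraph W} {x : W}
    (hx : (H.neighborSet x).Subsingleton) {w : W} {c : H.Walk w w} (hc : c.IsCycle) :
    x ∉ c.support := by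
  classical
  intro hmem
  have hc' := hc.rotate hmem
  set c' := c.rotate x hmem with hc'def
  clear_value c'
  cases c' with
  | nil => exact hc'.ne_nil rfl
  | @cons _ y _ h q =>
    rw [SimpleGraph.Walk.cons_isCycle_iff] at hc'
    have hqnil : ¬ q.reverse.Nil := SimpleGraph.Walk.not_nil_of_ne h.ne
    obtain ⟨z, h₂, r, hr⟩ := SimpleGraph.Walk.not_nil_iff.mp hqnil
    have hyz : y = z := hx (H.mem_neighborSet x y |>.mpr h) (H.mem_neighborSet x z |>.mpr h₂)
    have hmem2 : s(x, z) ∈ q.reverse.edges := by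
      rw [hr]; simp
    rw [SimpleGraph.Walk.edges_reverse, List.mem_reverse] at hmem2
    exact hc'.2 (hyz ▸ hmem2)

private def homToMap {V W : Type*} (f : V ↪ W) (G : SimpleGraph V) : G →g G.map f :=
  ⟨f, fun h => ⟨f.injective.ne h.ne, _, _, h, rfl, rfl⟩⟩

private lemma exists_walk_preimage {V W : Type*} {G : SimpleGraph V} (f : V ↪ W)
    {a b : W} (p : (G.map f).Walk a b) :
    ∀ (x y : V) (ha : a = f x) (hb : b = f y),
      ∃ q : G.Walk x y, q.map (homToMap f G) = p.copy ha hb := by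
  induction p with
  | nil =>
    intro x y ha hb
    have hxy : x = y := f.injective (ha.symm.trans hb)
    subst hxy
    subst ha
    exact ⟨SimpleGraph.Walk.nil, by simp; rfl⟩
  | @cons a c b h p ih =>
    intro x y ha hb
    obtain ⟨-, x', y', hadj, hx', hy'⟩ := h
    subst ha
    have hxx : x' = x := f.injective hx'
    subst hxx
    obtain ⟨q, hq⟩ := ih y' y hy'.symm hb
    refine ⟨SimpleGraph.Walk.cons hadj q, ?_⟩
    subst hy'
    simp [SimpleGraph.Walk.map_cons, hq]; subst hb; rfl

private lemma map_isAcyclic {V W : Type*} {G : SimpleGraph V} (hG : G.IsAcyclic)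
    (f : V ↪ W) : (G.map f).IsAcyclic := by
  intro w c hc
  obtain ⟨z, h, q, hq⟩ := SimpleGraph.Walk.not_nil_iff.mp hc.not_nil
  obtain ⟨-, x, y, hadj, hx, hy⟩ := h
  obtain ⟨p, hp⟩ := exists_walk_preimage f c x x hx.symm hx.symm
  have : (p.map (homToMap f G)).IsCycle := by
    rw [hp]; exact (SimpleGraph.Walk.isCycle_copy _ _).mpr hc
  exact hG p ((SimpleGraph.Walk.map_isCycle_iff_of_injective f.injective).mp this)

/-- Inductive step: from a graph `G` on `n₀` vertices that is the edge-disjoint union of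
`q₀+1` spanning trees, in which three fixed vertices `u₀, v₀, w₀` each have degree `q₀+2`
and span a triangle, where `q₀+1 < ⌊(n₀-1)/2⌋`, one obtains a graph `G'` on `n₀+2` vertices
that is the edge-disjoint union of `q₀+2` spanning trees, in which `u₀, v₀, w₀` each have
degree `q₀+3` and still span a triangle. -/
theorem stmt6 {V : Type*} [Fintype V] (n₀ q₀ : ℕ)
    (hcard : Fintype.card V = n₀) (hq : q₀ + 1 < (n₀ - 1) / 2)
    (G : SimpleGraph V) (T : Fin (q₀ + 1) → SimpleGraph V)
    (htree : ∀ i, (T i).IsTree)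
    (hdisj : Pairwise fun i j => Disjoint (T i).edgeSet (T j).edgeSet)
    (hsup : (⨆ i, T i) = G)
    (u₀ v₀ w₀ : V) (huv : u₀ ≠ v₀) (hvw : v₀ ≠ w₀) (huw : u₀ ≠ w₀)
    (ha1 : G.Adj u₀ v₀) (ha2 : G.Adj v₀ w₀) (ha3 : G.Adj u₀ w₀)
    (hd1 : (G.neighborSet u₀).ncard = q₀ + 2)
    (hd2 : (G.neighborSet v₀).ncard = q₀ + 2)
    (hd3 : (G.neighborSet w₀).ncard = q₀ + 2) :
    ∃ (G' : SimpleGraph (V ⊕ Fin 2)) (T' : Fin (q₀ + 2) → SimpleGraph (V ⊕ Fin 2)),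
      (∀ i, (T' i).IsTree) ∧
      (Pairwise fun i j => Disjoint (T' i).edgeSet (T' j).edgeSet) ∧
      (⨆ i, T' i) = G' ∧
      G'.Adj (Sum.inl u₀) (Sum.inl v₀) ∧
      G'.Adj (Sum.inl v₀) (Sum.inl w₀) ∧
      G'.Adj (Sum.inl u₀) (Sum.inl w₀) ∧
      (G'.neighborSet (Sum.inl u₀)).ncard = q₀ + 3 ∧
      (G'.neighborSet (Sum.inl v₀)).ncard = q₀ + 3 ∧
      (G'.neighborSet (Sum.inl w₀)).ncard = q₀ + 3 := by
  classical
  -- obtain the injection into V avoiding {u₀, v₀, w₀}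
  obtain ⟨f⟩ : Nonempty ((Fin (q₀+1) ⊕ Fin (q₀+1)) ↪ ↥(({u₀, v₀, w₀} : Finset V)ᶜ)) := by
    apply Function.Embedding.nonempty_of_card_le
    have h3 : ({u₀, v₀, w₀} : Finset V).card = 3 := by
      rw [Finset.card_insert_of_notMem (by simp [huv, huw]),
        Finset.card_insert_of_notMem (by simp [hvw]), Finset.card_singleton]
    simp only [Fintype.card_sum, Fintype.card_fin, Fintype.card_coe, Finset.card_compl, h3, hcard]
    omega
  set a : Fin (q₀+1) → V := fun i => ↑(f (Sum.inl i)) with ha_def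
  set b : Fin (q₀+1) → V := fun i => ↑(f (Sum.inr i)) with hb_def
  have hfinj : ∀ s t, (↑(f s) : V) = ↑(f t) → s = t := fun s t h => f.injective (Subtype.ext h)
  have haInj : Function.Injective a := fun i j h => Sum.inl_injective (hfinj _ _ h)
  have habne : ∀ i j, a i ≠ b j := fun i j h => by simpa using hfinj _ _ h
  have hfS : ∀ s, (↑(f s) : V) ≠ u₀ ∧ (↑(f s) : V) ≠ v₀ ∧ (↑(f s) : V) ≠ w₀ := by
    intro s
    have := (f s).2
    simp only [Finset.mem_compl, Finset.mem_insert, Finset.mem_singleton, not_or] at this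
    exact this
  -- the two new vertices
  set u : V ⊕ Fin 2 := Sum.inr 0 with hu_def
  set v : V ⊕ Fin 2 := Sum.inr 1 with hv_def
  have huvne : u ≠ v := by simp [hu_def, hv_def]
  set emb : V ↪ V ⊕ Fin 2 := ⟨Sum.inl, Sum.inl_injective⟩ with hemb_def
  set S : Fin (q₀+1) → SimpleGraph (V ⊕ Fin 2) := fun i => (T i).map emb with hS_def
  set TO : Fin (q₀+1) → SimpleGraph (V ⊕ Fin 2) :=
    fun i => S i ⊔ SimpleGraph.edge u (Sum.inl (a i)) ⊔ SimpleGraph.edge v (Sum.inl (b i))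
    with hTO_def
  set A : Set V := Set.range a with hA_def
  set E : Set (Sym2 (V ⊕ Fin 2)) :=
    {s(u,v)} ∪ ((fun x => s(u, Sum.inl x)) '' Aᶜ) ∪ ((fun x => s(v, Sum.inl x)) '' A) with hE_def
  set TN : SimpleGraph (V ⊕ Fin 2) := SimpleGraph.fromEdgeSet E with hTN_def
  have hbA : ∀ i, b i ∉ A := by
    rintro i ⟨j, hj⟩; exact habne j i hj
  have huA : u₀ ∉ A := by rintro ⟨j, hj⟩; exact (hfS _).1 hj
  have hvA : v₀ ∉ A := by rintro ⟨j, hj⟩; exact (hfS _).2.1 hj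
  have hwA : w₀ ∉ A := by rintro ⟨j, hj⟩; exact (hfS _).2.2 hj
  -- adjacency characterizations
  have hSadj : ∀ i (x y : V ⊕ Fin 2), (S i).Adj x y ↔
      ∃ p q, (T i).Adj p q ∧ Sum.inl p = x ∧ Sum.inl q = y := by
    intro i x y
    exact SimpleGraph.map_adj emb (T i) x y
  have hTNadj : ∀ (x y : V ⊕ Fin 2), TN.Adj x y ↔
      (s(x,y) = s(u,v) ∨ (∃ z ∉ A, s(x,y) = s(u, Sum.inl z)) ∨
        (∃ z ∈ A, s(x,y) = s(v, Sum.inl z))) := by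
    intro x y
    rw [hTN_def, SimpleGraph.fromEdgeSet_adj]
    constructor
    · rintro ⟨hmem, -⟩
      simp only [hE_def, Set.mem_union, Set.mem_singleton_iff, Set.mem_image] at hmem
      rcases hmem with (h | ⟨z, hz, h⟩) | ⟨z, hz, h⟩
      · exact Or.inl h
      · exact Or.inr (Or.inl ⟨z, hz, h.symm⟩)
      · exact Or.inr (Or.inr ⟨z, hz, h.symm⟩)
    · intro h
      refine ⟨?_, ?_⟩
      · simp only [hE_def, Set.mem_union, Set.mem_singleton_iff, Set.mem_image]
        rcases h with h | ⟨z, hz, h⟩ | ⟨z, hz, h⟩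
        · exact Or.inl (Or.inl h)
        · exact Or.inl (Or.inr ⟨z, hz, h.symm⟩)
        · exact Or.inr ⟨z, hz, h.symm⟩
      · rcases h with h | ⟨z, hz, h⟩ | ⟨z, hz, h⟩ <;>
          (rw [Sym2.eq_iff] at h; rcases h with ⟨rfl, rfl⟩ | ⟨rfl, rfl⟩ <;> simp [hu_def, hv_def])
  have hTOadj : ∀ i (x y : V ⊕ Fin 2), (TO i).Adj x y ↔
      ((S i).Adj x y ∨ (SimpleGraph.edge u (Sum.inl (a i))).Adj x y ∨
        (SimpleGraph.edge v (Sum.inl (b i))).Adj x y) := by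
    intro i x y
    rw [hTO_def]
    simp only [SimpleGraph.sup_adj, or_assoc]
  -- TO i is connected
  have hTOconn : ∀ i, (TO i).Connected := by
    intro i
    have hSle : S i ≤ TO i := by rw [hTO_def]; exact le_sup_left.trans le_sup_left
    have hinl : ∀ x : V, (TO i).Reachable (Sum.inl x) (Sum.inl (a i)) := by
      intro x
      have hr : (T i).Reachable x (a i) := ((htree i).1).preconnected x (a i)
      have hmapped := SimpleGraph.Reachable.map (homToMap emb (T i)) hr
      exact (hmapped.mono hSle)
    have hroot : ∀ z : V ⊕ Fin 2, (TO i).Reachable z (Sum.inl (a i)) := by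
      intro z
      match z with
      | Sum.inl x => exact hinl x
      | Sum.inr j =>
        fin_cases j
        · refine ((hTOadj i u (Sum.inl (a i))).mpr (Or.inr (Or.inl ?_))).reachable
          rw [SimpleGraph.edge_adj]
          exact ⟨Or.inl ⟨rfl, rfl⟩, by simp [hu_def]⟩
        · refine (((hTOadj i v (Sum.inl (b i))).mpr (Or.inr (Or.inr ?_))).reachable).trans
            (hinl (b i))
          rw [SimpleGraph.edge_adj]
          exact ⟨Or.inl ⟨rfl, rfl⟩, by simp [hv_def]⟩
    exact ⟨fun x y => (hroot x).trans (hroot y).symm⟩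
  -- TO i is acyclic
  have hTOacyc : ∀ i, (TO i).IsAcyclic := by
    intro i w c hc
    have hu_sub : ((TO i).neighborSet u).Subsingleton := by
      intro y hy z hz
      rw [SimpleGraph.mem_neighborSet, hTOadj] at hy hz
      have resolve : ∀ t : V ⊕ Fin 2,
          ((S i).Adj u t ∨ (SimpleGraph.edge u (Sum.inl (a i))).Adj u t ∨
            (SimpleGraph.edge v (Sum.inl (b i))).Adj u t) → t = Sum.inl (a i) := by
        rintro t (h | h | h)
        · obtain ⟨p, q, _, hp, _⟩ := (hSadj i u t).mp h
          simp [hu_def] at hp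
        · rw [SimpleGraph.edge_adj] at h
          rcases h with ⟨⟨h1, h2⟩ | ⟨h1, h2⟩, hne⟩
          · exact h2
          · simp [hu_def] at h1
        · rw [SimpleGraph.edge_adj] at h
          rcases h with ⟨⟨h1, h2⟩ | ⟨h1, h2⟩, hne⟩
          · simp [hu_def, hv_def] at h1
          · simp [hu_def] at h1
      rw [resolve y hy, resolve z hz]
    have hv_sub : ((TO i).neighborSet v).Subsingleton := by
      intro y hy z hz
      rw [SimpleGraph.mem_neighborSet, hTOadj] at hy hz
      have resolve : ∀ t : V ⊕ Fin 2,
          ((S i).Adj v t ∨ (SimpleGraph.edge u (Sum.inl (a i))).Adj v t ∨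
            (SimpleGraph.edge v (Sum.inl (b i))).Adj v t) → t = Sum.inl (b i) := by
        rintro t (h | h | h)
        · obtain ⟨p, q, _, hp, _⟩ := (hSadj i v t).mp h
          simp [hv_def] at hp
        · rw [SimpleGraph.edge_adj] at h
          rcases h with ⟨⟨h1, h2⟩ | ⟨h1, h2⟩, hne⟩
          · simp [hu_def, hv_def] at h1
          · simp [hv_def] at h1
        · rw [SimpleGraph.edge_adj] at h
          rcases h with ⟨⟨h1, h2⟩ | ⟨h1, h2⟩, hne⟩
          · exact h2
          · simp [hv_def] at h1
      rw [resolve y hy, resolve z hz]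
    have hunotin := pendant_not_mem_cycle hu_sub hc
    have hvnotin := pendant_not_mem_cycle hv_sub hc
    have hedges : ∀ e ∈ c.edges, e ∈ (S i).edgeSet := by
      intro e he
      induction e using Sym2.ind with
      | _ x y =>
        have hxs : x ∈ c.support := SimpleGraph.Walk.fst_mem_support_of_mem_edges c he
        have hys : y ∈ c.support := SimpleGraph.Walk.snd_mem_support_of_mem_edges c he
        have hadj : (TO i).Adj x y := c.edges_subset_edgeSet he
        rw [hTOadj] at hadj
        rcases hadj with h | h | h
        · exact h
        · rw [SimpleGraph.edge_adj] at h
          rcases h with ⟨⟨h1, h2⟩ | ⟨h1, h2⟩, hne⟩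
          · exact absurd (h1 ▸ hxs) hunotin
          · exact absurd (h2 ▸ hys) hunotin
        · rw [SimpleGraph.edge_adj] at h
          rcases h with ⟨⟨h1, h2⟩ | ⟨h1, h2⟩, hne⟩
          · exact absurd (h1 ▸ hxs) hvnotin
          · exact absurd (h2 ▸ hys) hvnotin
    exact map_isAcyclic (htree i).2 emb (c.transfer (S i) hedges) (hc.transfer hedges)
  -- the new tree: adjacencies
  have hTNuv : TN.Adj u v := (hTNadj u v).mpr (Or.inl rfl)
  have hTNu : ∀ x : V, x ∉ A → TN.Adj u (Sum.inl x) :=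
    fun x hx => (hTNadj _ _).mpr (Or.inr (Or.inl ⟨x, hx, rfl⟩))
  have hTNv : ∀ x : V, x ∈ A → TN.Adj v (Sum.inl x) :=
    fun x hx => (hTNadj _ _).mpr (Or.inr (Or.inr ⟨x, hx, rfl⟩))
  -- TN is connected
  have hTNconn : TN.Connected := by
    have hroot : ∀ z : V ⊕ Fin 2, TN.Reachable z u := by
      intro z
      match z with
      | Sum.inl x =>
        by_cases hx : x ∈ A
        · exact ((hTNv x hx).symm.reachable).trans (hTNuv.symm.reachable)
        · exact (hTNu x hx).symm.reachable
      | Sum.inr j =>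
        fin_cases j
        · rfl
        · exact hTNuv.symm.reachable
    exact ⟨fun x y => (hroot x).trans (hroot y).symm⟩
  -- TN is acyclic
  have hTNacyc : TN.IsAcyclic := by
    intro w c hc
    have hresolve : ∀ (x : V) (y : V ⊕ Fin 2), TN.Adj (Sum.inl x) y →
        (y = u ∧ x ∉ A) ∨ (y = v ∧ x ∈ A) := by
      intro x y h
      rw [hTNadj] at h
      rcases h with h | ⟨z, hz, h⟩ | ⟨z, hz, h⟩ <;> rw [Sym2.eq_iff] at h <;>
        rcases h with ⟨h1, h2⟩ | ⟨h1, h2⟩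
      · simp [hu_def] at h1
      · simp [hv_def] at h1
      · simp [hu_def] at h1
      · exact Or.inl ⟨h2, by rwa [Sum.inl_injective h1]⟩
      · simp [hv_def] at h1
      · exact Or.inr ⟨h2, by rwa [Sum.inl_injective h1]⟩
    have hinl : ∀ x : V, (Sum.inl x : V ⊕ Fin 2) ∉ c.support := by
      intro x
      refine pendant_not_mem_cycle ?_ hc
      intro y hy z hz
      rw [SimpleGraph.mem_neighborSet] at hy hz
      rcases hresolve x y hy with ⟨rfl, hxA⟩ | ⟨rfl, hxA⟩ <;>
        rcases hresolve x z hz with ⟨rfl, hxA'⟩ | ⟨rfl, hxA'⟩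
      · rfl
      · exact absurd hxA' hxA
      · exact absurd hxA hxA'
      · rfl
    have hsub : c.support.tail.toFinset ⊆ {u, v} := by
      intro z hz
      have hzs : z ∈ c.support := List.tail_subset _ (List.mem_toFinset.mp hz)
      match z with
      | Sum.inl x => exact absurd hzs (hinl x)
      | Sum.inr j =>
        fin_cases j
        · exact Finset.mem_insert_self _ _
        · exact Finset.mem_insert_of_mem (Finset.mem_singleton_self _)
    have hnodup : c.support.tail.Nodup := ((SimpleGraph.Walk.isCycle_def c).mp hc).2.2
    have hcardeq : c.support.tail.toFinset.card = c.support.tail.length :=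
      List.toFinset_card_of_nodup hnodup
    have hlen : c.support.tail.length = c.length := by
      have := SimpleGraph.Walk.length_support c
      simp only [List.length_tail, this]
      omega
    have hle := Finset.card_le_card hsub
    have h2 : ({u, v} : Finset (V ⊕ Fin 2)).card ≤ 2 :=
      (Finset.card_insert_le _ _).trans (by simp)
    have h3 := hc.three_le_length
    omega
  have hbInj : Function.Injective b := fun i j h => Sum.inr_injective (hfinj _ _ h)
  -- edge-level helper
  have hedgeAdj : ∀ (s t x y : V ⊕ Fin 2), (SimpleGraph.edge s t).Adj x y → s(x,y) = s(s,t) := by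
    intro s t x y h
    rw [SimpleGraph.edge, SimpleGraph.fromEdgeSet_adj] at h
    exact h.1
  have hdisj_of : ∀ (P Q : SimpleGraph (V ⊕ Fin 2)),
      (∀ x y, P.Adj x y → Q.Adj x y → False) → Disjoint P.edgeSet Q.edgeSet := by
    intro P Q h
    rw [Set.disjoint_left]
    intro e heP heQ
    induction e using Sym2.ind with
    | _ x y => exact h x y heP heQ
  -- old vs old
  have hkey_oo : ∀ i j : Fin (q₀+1), i ≠ j → Disjoint (TO i).edgeSet (TO j).edgeSet := by
    intro i j hij
    apply hdisj_of
    intro x y hx hy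
    rw [hTOadj] at hx hy
    rcases hx with hx | hx | hx <;> rcases hy with hy | hy | hy
    · obtain ⟨p, q, hpq, hp, hq⟩ := (hSadj i x y).mp hx
      obtain ⟨p', q', hpq', hp', hq'⟩ := (hSadj j x y).mp hy
      have hpp : p' = p := Sum.inl_injective (hp'.trans hp.symm)
      have hqq : q' = q := Sum.inl_injective (hq'.trans hq.symm)
      subst hpp; subst hqq
      exact Set.disjoint_left.mp (hdisj hij) ((T i).mem_edgeSet.mpr hpq)
        ((T j).mem_edgeSet.mpr hpq')
    · obtain ⟨p, q, hpq, hp, hq⟩ := (hSadj i x y).mp hx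
      have h := hedgeAdj _ _ _ _ hy; rw [Sym2.eq_iff] at h
      rcases h with ⟨h1, h2⟩ | ⟨h1, h2⟩
      · rw [← hp] at h1; simp [hu_def] at h1
      · rw [← hq] at h2; simp [hu_def] at h2
    · obtain ⟨p, q, hpq, hp, hq⟩ := (hSadj i x y).mp hx
      have h := hedgeAdj _ _ _ _ hy; rw [Sym2.eq_iff] at h
      rcases h with ⟨h1, h2⟩ | ⟨h1, h2⟩
      · rw [← hp] at h1; simp [hv_def] at h1
      · rw [← hq] at h2; simp [hv_def] at h2
    · obtain ⟨p, q, hpq, hp, hq⟩ := (hSadj j x y).mp hy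
      have h := hedgeAdj _ _ _ _ hx; rw [Sym2.eq_iff] at h
      rcases h with ⟨h1, h2⟩ | ⟨h1, h2⟩
      · rw [← hp] at h1; simp [hu_def] at h1
      · rw [← hq] at h2; simp [hu_def] at h2
    · have h := (hedgeAdj _ _ _ _ hx).symm.trans (hedgeAdj _ _ _ _ hy)
      rw [Sym2.eq_iff] at h
      rcases h with ⟨h1, h2⟩ | ⟨h1, h2⟩
      · exact hij (haInj (Sum.inl_injective h2))
      · simp [hu_def] at h1
    · have h := (hedgeAdj _ _ _ _ hx).symm.trans (hedgeAdj _ _ _ _ hy)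
      rw [Sym2.eq_iff] at h
      rcases h with ⟨h1, h2⟩ | ⟨h1, h2⟩
      · simp [hu_def, hv_def] at h1
      · simp [hu_def] at h1
    · obtain ⟨p, q, hpq, hp, hq⟩ := (hSadj j x y).mp hy
      have h := hedgeAdj _ _ _ _ hx; rw [Sym2.eq_iff] at h
      rcases h with ⟨h1, h2⟩ | ⟨h1, h2⟩
      · rw [← hp] at h1; simp [hv_def] at h1
      · rw [← hq] at h2; simp [hv_def] at h2
    · have h := (hedgeAdj _ _ _ _ hx).symm.trans (hedgeAdj _ _ _ _ hy)
      rw [Sym2.eq_iff] at h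
      rcases h with ⟨h1, h2⟩ | ⟨h1, h2⟩
      · simp [hu_def, hv_def] at h1
      · simp [hv_def] at h1
    · have h := (hedgeAdj _ _ _ _ hx).symm.trans (hedgeAdj _ _ _ _ hy)
      rw [Sym2.eq_iff] at h
      rcases h with ⟨h1, h2⟩ | ⟨h1, h2⟩
      · exact hij (hbInj (Sum.inl_injective h2))
      · simp [hv_def] at h1
  -- old vs new
  have hkey_on : ∀ i : Fin (q₀+1), Disjoint (TO i).edgeSet TN.edgeSet := by
    intro i
    apply hdisj_of
    intro x y hx hy
    rw [hTOadj] at hx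
    rw [hTNadj] at hy
    rcases hx with hx | hx | hx
    · obtain ⟨p, q, hpq, hp, hq⟩ := (hSadj i x y).mp hx
      rcases hy with h | ⟨z, hz, h⟩ | ⟨z, hz, h⟩ <;> rw [Sym2.eq_iff] at h <;>
          rcases h with ⟨h1, h2⟩ | ⟨h1, h2⟩
      · rw [← hp] at h1; simp [hu_def] at h1
      · rw [← hp] at h1; simp [hv_def] at h1
      · rw [← hp] at h1; simp [hu_def] at h1
      · rw [← hq] at h2; simp [hu_def] at h2
      · rw [← hp] at h1; simp [hv_def] at h1
      · rw [← hq] at h2; simp [hv_def] at h2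
    · have h0 := hedgeAdj _ _ _ _ hx
      rcases hy with h | ⟨z, hz, h⟩ | ⟨z, hz, h⟩ <;>
          (have h' := h0.symm.trans h; rw [Sym2.eq_iff] at h') <;>
          rcases h' with ⟨h1, h2⟩ | ⟨h1, h2⟩
      · simp [hv_def] at h2
      · simp [hu_def, hv_def] at h1
      · exact hz ⟨i, Sum.inl_injective h2⟩
      · simp [hu_def] at h1
      · simp [hu_def, hv_def] at h1
      · simp [hu_def] at h1
    · have h0 := hedgeAdj _ _ _ _ hx
      rcases hy with h | ⟨z, hz, h⟩ | ⟨z, hz, h⟩ <;>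
          (have h' := h0.symm.trans h; rw [Sym2.eq_iff] at h') <;>
          rcases h' with ⟨h1, h2⟩ | ⟨h1, h2⟩
      · simp [hu_def, hv_def] at h1
      · simp [hu_def] at h2
      · simp [hu_def, hv_def] at h1
      · simp [hv_def] at h1
      · exact hbA i ((Sum.inl_injective h2) ▸ hz)
      · simp [hv_def] at h1
  -- assemble the family
  set T' : Fin (q₀+2) → SimpleGraph (V ⊕ Fin 2) :=
    fun i => Fin.lastCases TN TO i with hT'_def
  have hT'last : T' (Fin.last (q₀+1)) = TN := by simp [hT'_def]
  have hT'cast : ∀ i : Fin (q₀+1), T' i.castSucc = TO i := by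
    intro i; simp [hT'_def]
  have hG'adj : ∀ x y : V ⊕ Fin 2, (⨆ i, T' i).Adj x y ↔
      ((∃ i, (TO i).Adj x y) ∨ TN.Adj x y) := by
    intro x y
    rw [SimpleGraph.iSup_adj]
    constructor
    · rintro ⟨i, hi⟩
      induction i using Fin.lastCases with
      | last => rw [hT'last] at hi; exact Or.inr hi
      | cast i => rw [hT'cast] at hi; exact Or.inl ⟨i, hi⟩
    · rintro (⟨i, hi⟩ | h)
      · exact ⟨i.castSucc, by rw [hT'cast]; exact hi⟩
      · exact ⟨Fin.last _, by rw [hT'last]; exact h⟩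
  have htri : ∀ x y : V, G.Adj x y → (⨆ i, T' i).Adj (Sum.inl x) (Sum.inl y) := by
    intro x y hxy
    have h1 : (⨆ i, T i).Adj x y := by rw [hsup]; exact hxy
    obtain ⟨i, hi⟩ := SimpleGraph.iSup_adj.mp h1
    exact (hG'adj _ _).mpr (Or.inl ⟨i, (hTOadj i _ _).mpr
      (Or.inl ((hSadj i _ _).mpr ⟨x, y, hi, rfl, rfl⟩))⟩)
  have hnbr : ∀ x : V, x ∉ A → (∀ i, x ≠ b i) →
      (⨆ i, T' i).neighborSet (Sum.inl x) = Sum.inl '' (G.neighborSet x) ∪ {u} := by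
    intro x hxA hxb
    ext z
    simp only [SimpleGraph.mem_neighborSet, Set.mem_union, Set.mem_image,
      Set.mem_singleton_iff]
    rw [hG'adj]
    constructor
    · rintro (⟨i, hi⟩ | h)
      · rw [hTOadj] at hi
        rcases hi with hi | hi | hi
        · obtain ⟨p, q, hpq, hp, hq⟩ := (hSadj i _ _).mp hi
          have hpx : p = x := Sum.inl_injective hp
          subst hpx
          exact Or.inl ⟨q, by rw [← hsup]; exact (le_iSup T i) hpq, hq⟩
        · have h0 := hedgeAdj _ _ _ _ hi
          rw [Sym2.eq_iff] at h0
          rcases h0 with ⟨h1, h2⟩ | ⟨h1, h2⟩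
          · simp [hu_def] at h1
          · exact absurd ⟨i, (Sum.inl_injective h1).symm⟩ hxA
        · have h0 := hedgeAdj _ _ _ _ hi
          rw [Sym2.eq_iff] at h0
          rcases h0 with ⟨h1, h2⟩ | ⟨h1, h2⟩
          · simp [hv_def] at h1
          · exact absurd (Sum.inl_injective h1) (hxb i)
      · rw [hTNadj] at h
        rcases h with h | ⟨z', hz', h⟩ | ⟨z', hz', h⟩ <;> rw [Sym2.eq_iff] at h <;>
            rcases h with ⟨h1, h2⟩ | ⟨h1, h2⟩
        · simp [hu_def] at h1
        · simp [hv_def] at h1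
        · simp [hu_def] at h1
        · exact Or.inr h2
        · simp [hv_def] at h1
        · exact absurd ((Sum.inl_injective h1) ▸ hz') hxA
    · rintro (⟨y, hy, rfl⟩ | rfl)
      · have h1 : (⨆ i, T i).Adj x y := by rw [hsup]; exact hy
        obtain ⟨i, hi⟩ := SimpleGraph.iSup_adj.mp h1
        exact Or.inl ⟨i, (hTOadj i _ _).mpr (Or.inl ((hSadj i _ _).mpr ⟨x, y, hi, rfl, rfl⟩))⟩
      · exact Or.inr ((hTNu x hxA).symm)
  have hncard : ∀ x : V, x ∉ A → (∀ i, x ≠ b i) →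
      ((⨆ i, T' i).neighborSet (Sum.inl x)).ncard = (G.neighborSet x).ncard + 1 := by
    intro x hxA hxb
    rw [hnbr x hxA hxb, Set.union_singleton,
      Set.ncard_insert_of_notMem (by simp [hu_def]) (Set.toFinite _),
      Set.ncard_image_of_injective _ Sum.inl_injective]
  have hxbu : ∀ i, u₀ ≠ b i := fun i h => (hfS (Sum.inr i)).1 h.symm
  have hxbv : ∀ i, v₀ ≠ b i := fun i h => (hfS (Sum.inr i)).2.1 h.symm
  have hxbw : ∀ i, w₀ ≠ b i := fun i h => (hfS (Sum.inr i)).2.2 h.symm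
  refine ⟨⨆ i, T' i, T', ?_, ?_, rfl, ?_, ?_, ?_, ?_, ?_, ?_⟩
  · intro i
    induction i using Fin.lastCases with
    | last => rw [hT'last]; exact ⟨hTNconn, hTNacyc⟩
    | cast i => rw [hT'cast]; exact ⟨hTOconn i, hTOacyc i⟩
  · intro i j hij
    induction i using Fin.lastCases with
    | last =>
      induction j using Fin.lastCases with
      | last => exact absurd rfl hij
      | cast j => rw [hT'last, hT'cast]; exact (hkey_on j).symm
    | cast i =>
      induction j using Fin.lastCases with
      | last => rw [hT'last, hT'cast]; exact hkey_on i
      | cast j =>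
        rw [hT'cast, hT'cast]
        exact hkey_oo i j (fun h => hij (by rw [h]))
  · exact htri u₀ v₀ ha1
  · exact htri v₀ w₀ ha2
  · exact htri u₀ w₀ ha3
  · rw [hncard u₀ huA hxbu, hd1]
  · rw [hncard v₀ hvA hxbv, hd2]
  · rw [hncard w₀ hwA hxbw, hd3]
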